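/- The group of homomorphisms from SL(2,Z) to the nonzero complex numbers is cyclic of order 12, generated by the character χ satisfying χ(T) = e^{2πi/12} and χ(S) = e^{-2πi/4}, where T = [[1,1],[0,1]] and S = [[0,-1],[1,0]]. -/

import Mathlib

set_option autoImplicit false

open Matrix MatrixGroups Complex

/-! Auxiliary development: the character of `SL(2,ℤ)` of order 12. -/

/-- The exponent polynomial: for a matrix `[[a,b],[c,d]]` in `SL(2,ℤ)`, the value
`Epoly a b c d` reduces mod 12 to the exponent of the eta-character. -/
def Epoly {R : Type*} [CommRing R] (a b c d : R) : R :=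
  3*d + 9*d*d + 6*c + c*d + 9*c*d*d + 9*c*c + 9*c*c*d + b*d + 9*b*c + 9*b*c*d + 9*b*c*c
    + 8*b*c*c*d + a*c

set_option maxRecDepth 10000 in
lemma hom4 : ∀ a b c d : ZMod 4, a*d - b*c = 1 → ∀ e f g h : ZMod 4, e*h - f*g = 1 →
    Epoly (a*e+b*g) (a*f+b*h) (c*e+d*g) (c*f+d*h) = Epoly a b c d + Epoly e f g h := by decide

set_option maxRecDepth 10000 in
lemma hom3 : ∀ a b c d : ZMod 3, a*d - b*c = 1 → ∀ e f g h : ZMod 3, e*h - f*g = 1 →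
    Epoly (a*e+b*g) (a*f+b*h) (c*e+d*g) (c*f+d*h) = Epoly a b c d + Epoly e f g h := by decide

def Eexp (γ : SL(2,ℤ)) : ℤ := Epoly (γ 0 0) (γ 0 1) (γ 1 0) (γ 1 1)

lemma det_entries (A : SL(2,ℤ)) : A 0 0 * A 1 1 - A 0 1 * A 1 0 = 1 := by
  have := A.prop
  rwa [Matrix.det_fin_two] at this

lemma mul_entry (A B : SL(2,ℤ)) (i j : Fin 2) :
    (A * B) i j = A i 0 * B 0 j + A i 1 * B 1 j := by
  show (↑(A * B) : Matrix (Fin 2) (Fin 2) ℤ) i j = _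
  rw [Matrix.SpecialLinearGroup.coe_mul, Matrix.mul_apply, Fin.sum_univ_two]

lemma modcast (n : ℕ) [NeZero n] (A : SL(2,ℤ)) :
    ((Eexp A : ℤ) : ZMod n) = Epoly ((A 0 0 : ℤ) : ZMod n) (A 0 1 : ℤ) (A 1 0 : ℤ) (A 1 1 : ℤ) := by
  simp only [Eexp, Epoly]
  push_cast
  ring

lemma key (A B : SL(2,ℤ)) : (12:ℤ) ∣ Eexp (A * B) - (Eexp A + Eexp B) := by
  have h4 : ((4:ℕ):ℤ) ∣ Eexp (A * B) - (Eexp A + Eexp B) := by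
    rw [← ZMod.intCast_zmod_eq_zero_iff_dvd]
    push_cast [modcast 4, mul_entry]
    rw [sub_eq_zero]
    exact hom4 _ _ _ _ (by rw [← Int.cast_mul, ← Int.cast_mul, ← Int.cast_sub, det_entries A]; norm_num)
      _ _ _ _ (by rw [← Int.cast_mul, ← Int.cast_mul, ← Int.cast_sub, det_entries B]; norm_num)
  have h3 : ((3:ℕ):ℤ) ∣ Eexp (A * B) - (Eexp A + Eexp B) := by
    rw [← ZMod.intCast_zmod_eq_zero_iff_dvd]
    push_cast [modcast 3, mul_entry]
    rw [sub_eq_zero]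
    exact hom3 _ _ _ _ (by rw [← Int.cast_mul, ← Int.cast_mul, ← Int.cast_sub, det_entries A]; norm_num)
      _ _ _ _ (by rw [← Int.cast_mul, ← Int.cast_mul, ← Int.cast_sub, det_entries B]; norm_num)
  have hco : IsCoprime (4:ℤ) 3 := by
    rw [Int.isCoprime_iff_gcd_eq_one]; norm_num
  exact (show (12:ℤ) = 4*3 by norm_num) ▸ hco.mul_dvd (by exact_mod_cast h4) (by exact_mod_cast h3)

noncomputable def zeta : ℂˣ :=
  Units.mk0 (Complex.exp (2 * ↑Real.pi * I / 12)) (Complex.exp_ne_zero _)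

lemma zeta_val : (zeta : ℂ) = Complex.exp (2 * ↑Real.pi * I / 12) := rfl

lemma zeta_prim : IsPrimitiveRoot (zeta : ℂ) 12 := by
  have := Complex.isPrimitiveRoot_exp 12 (by norm_num)
  rwa [show ((12:ℕ):ℂ) = 12 by norm_num] at this

lemma zeta_pow_twelve : zeta ^ (12:ℕ) = 1 := by
  ext
  push_cast [zeta_val]
  rw [← Complex.exp_nat_mul]
  rw [show (12:ℕ) * (2 * ↑Real.pi * I / 12) = 2 * ↑Real.pi * I by push_cast; ring]
  exact Complex.exp_two_pi_mul_I

lemma zeta_zpow_congr {m n : ℤ} (h : (12:ℤ) ∣ m - n) : zeta ^ m = zeta ^ n := by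
  obtain ⟨k, hk⟩ := h
  have hm : m = n + 12 * k := by linarith
  rw [hm, _root_.zpow_add, _root_.zpow_mul,
    show (zeta ^ (12:ℤ)) = 1 by
      rw [show ((12:ℤ)) = ((12:ℕ):ℤ) by norm_num, zpow_natCast, zeta_pow_twelve],
    _root_.one_zpow, mul_one]

/-- The character of order 12 of `SL(2,ℤ)`. -/
noncomputable def chi : SL(2,ℤ) →* ℂˣ :=
  MonoidHom.mk' (fun γ => zeta ^ Eexp γ)
    (fun A B => by
      show zeta ^ Eexp (A*B) = zeta ^ Eexp A * zeta ^ Eexp B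
      rw [← _root_.zpow_add]
      exact zeta_zpow_congr (key A B))

lemma chi_apply (γ : SL(2,ℤ)) : chi γ = zeta ^ Eexp γ := rfl

lemma Eexp_T : Eexp ModularGroup.T = 13 := by decide

lemma Eexp_S : Eexp ModularGroup.S = -3 := by decide

lemma rel1 : ModularGroup.S ^ 4 = 1 := by
  ext i j
  fin_cases i <;> fin_cases j <;>
    simp [pow_succ, SpecialLinearGroup.coe_mul, Matrix.mul_apply, Fin.sum_univ_two,
      ModularGroup.coe_S, ModularGroup.coe_T]

lemma rel2 : ModularGroup.S ^ 2 = (ModularGroup.S * ModularGroup.T) ^ 3 := by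
  ext i j
  fin_cases i <;> fin_cases j <;>
    simp [pow_succ, SpecialLinearGroup.coe_mul, Matrix.mul_apply, Fin.sum_univ_two,
      ModularGroup.coe_S, ModularGroup.coe_T]

lemma rel3 : (ModularGroup.S * ModularGroup.T) ^ 6 = 1 := by
  ext i j
  fin_cases i <;> fin_cases j <;>
    simp [pow_succ, SpecialLinearGroup.coe_mul, Matrix.mul_apply, Fin.sum_univ_two,
      ModularGroup.coe_S, ModularGroup.coe_T]

lemma eq_T_zpow (γ : SL(2,ℤ)) (hc : γ 1 0 = 0) (ha : γ 0 0 = 1) (hd : γ 1 1 = 1) :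
    γ = ModularGroup.T ^ (γ 0 1) := by
  apply Matrix.SpecialLinearGroup.ext
  intro i j
  rw [show ((ModularGroup.T ^ (γ 0 1) : SL(2,ℤ)) : Matrix (Fin 2) (Fin 2) ℤ) i j
      = !![1, (γ 0 1); 0, 1] i j by rw [ModularGroup.coe_T_zpow]]
  fin_cases i <;> fin_cases j <;> simp [ha, hd, hc]

lemma coe_S_sq : ((ModularGroup.S ^ 2 : SL(2,ℤ)) : Matrix (Fin 2) (Fin 2) ℤ) = !![-1,0;0,-1] := by
  rw [pow_two, Matrix.SpecialLinearGroup.coe_mul, ModularGroup.coe_S]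
  norm_num [Matrix.mul_fin_two]

lemma eq_neg_T_zpow (γ : SL(2,ℤ)) (hc : γ 1 0 = 0) (ha : γ 0 0 = -1) (hd : γ 1 1 = -1) :
    γ = ModularGroup.S ^ 2 * ModularGroup.T ^ (-(γ 0 1)) := by
  apply Matrix.SpecialLinearGroup.ext
  intro i j
  rw [show ((ModularGroup.S ^ 2 * ModularGroup.T ^ (-(γ 0 1)) : SL(2,ℤ)) : Matrix (Fin 2) (Fin 2) ℤ) i j
      = ((!![-1,0;0,-1] : Matrix (Fin 2) (Fin 2) ℤ) * !![1, -(γ 0 1); 0, 1]) i j by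
        rw [Matrix.SpecialLinearGroup.coe_mul, coe_S_sq, ModularGroup.coe_T_zpow]]
  rw [show ((!![-1,0;0,-1] : Matrix (Fin 2) (Fin 2) ℤ) * !![1, -(γ 0 1); 0, 1])
      = !![-1, γ 0 1; 0, -1] by norm_num [Matrix.mul_fin_two]]
  fin_cases i <;> fin_cases j <;> simp [ha, hd, hc]

lemma closure_ST : Subgroup.closure ({ModularGroup.S, ModularGroup.T} : Set SL(2,ℤ)) = ⊤ := by
  set H := Subgroup.closure ({ModularGroup.S, ModularGroup.T} : Set SL(2,ℤ)) with hH
  have hS : ModularGroup.S ∈ H := Subgroup.subset_closure (by simp)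
  have hT : ModularGroup.T ∈ H := Subgroup.subset_closure (by simp)
  rw [Subgroup.eq_top_iff']
  have main : ∀ n : ℕ, ∀ γ : SL(2,ℤ), (γ 1 0).natAbs = n → γ ∈ H := by
    intro n
    induction n using Nat.strong_induction_on with
    | _ n ih =>
      intro γ hn
      rcases eq_or_ne (γ 1 0) 0 with hc | hc
      · have hdet := det_entries γ
        rw [hc, mul_zero, sub_zero] at hdet
        rcases Int.mul_eq_one_iff_eq_one_or_neg_one.mp hdet with ⟨ha, hd⟩ | ⟨ha, hd⟩
        · rw [eq_T_zpow γ hc ha hd]; exact Subgroup.zpow_mem H hT _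
        · rw [eq_neg_T_zpow γ hc ha hd]
          exact H.mul_mem (H.pow_mem hS 2) (H.zpow_mem hT _)
      · set c := γ 1 0 with hcdef
        set q := γ 0 0 / c with hq
        set γ' := ModularGroup.S * ModularGroup.T ^ (-q) * γ with hγ'
        have hentry : γ' 1 0 = γ 0 0 % c := by
          show (↑γ' : Matrix (Fin 2) (Fin 2) ℤ) 1 0 = _
          rw [hγ']
          simp only [Matrix.SpecialLinearGroup.coe_mul, ModularGroup.coe_T_zpow, ModularGroup.coe_S,
            Matrix.mul_apply, Fin.sum_univ_two]
          simp [Matrix.cons_val_zero, Matrix.cons_val_one]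
          rw [Int.emod_def]; ring
        have habs : c.natAbs = n := hn
        have h1 : 0 ≤ γ 0 0 % c := Int.emod_nonneg _ hc
        have h2 : γ 0 0 % c < |c| := by
          rcases lt_or_gt_of_ne hc with h | h
          · rw [abs_of_neg h, show γ 0 0 % c = γ 0 0 % (-(-c)) by ring_nf, Int.emod_neg]
            exact Int.emod_lt_of_pos _ (by linarith)
          · rw [abs_of_pos h]; exact Int.emod_lt_of_pos _ h
        have hlt : (γ' 1 0).natAbs < n := by
          rw [hentry, ← habs, ← Int.natAbs_abs c]
          exact Int.natAbs_lt_natAbs_of_nonneg_of_lt h1 h2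
        have h1' : γ' ∈ H := ih _ hlt γ' rfl
        have : γ = ModularGroup.T ^ q * ModularGroup.S⁻¹ * γ' := by
          rw [hγ']; group
        rw [this]
        exact H.mul_mem (H.mul_mem (H.zpow_mem hT q) (H.inv_mem hS)) h1'
  intro γ; exact main _ γ rfl

lemma zeta_order : orderOf zeta = 12 := by
  rw [← orderOf_units, ← zeta_prim.eq_orderOf]

lemma chi_T : chi ModularGroup.T = zeta := by
  rw [chi_apply, Eexp_T, show (13:ℤ) = 1 + 12 by norm_num]
  rw [zeta_zpow_congr (by norm_num : (12:ℤ) ∣ (1+12) - 1), zpow_one]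

lemma chi_S : chi ModularGroup.S = zeta ^ (9:ℕ) := by
  rw [chi_apply, Eexp_S, zeta_zpow_congr (by norm_num : (12:ℤ) ∣ (-3:ℤ) - 9),
    show (9:ℤ) = ((9:ℕ):ℤ) by norm_num, zpow_natCast]

lemma chi_T_val : (chi ModularGroup.T : ℂ) = Complex.exp (2 * (Real.pi) * I * (1 / 12)) := by
  rw [chi_T, zeta_val]
  congr 1; ring

lemma chi_S_val : (chi ModularGroup.S : ℂ) = Complex.exp (-(2 * (Real.pi) * I * (1 / 4))) := by
  rw [chi_S]
  push_cast [zeta_val]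
  rw [← Complex.exp_nat_mul,
    show (9:ℕ) * (2 * (Real.pi:ℂ) * I / 12) = -(2 * (Real.pi:ℂ) * I * (1 / 4)) + 2 * Real.pi * I by
      push_cast; ring,
    Complex.exp_add, Complex.exp_two_pi_mul_I, mul_one]

lemma chi_pow_twelve : chi ^ (12:ℕ) = 1 := by
  apply MonoidHom.ext
  intro γ
  rw [MonoidHom.pow_apply, MonoidHom.one_apply, chi_apply,
    ← zpow_natCast (zeta ^ Eexp γ) 12, ← _root_.zpow_mul,
    zeta_zpow_congr (⟨Eexp γ, by push_cast; ring⟩ : (12:ℤ) ∣ Eexp γ * (12:ℕ) - 0), zpow_zero]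

lemma chi_order : orderOf chi = 12 := by
  apply Nat.dvd_antisymm (orderOf_dvd_of_pow_eq_one chi_pow_twelve)
  rw [← zeta_order]
  apply orderOf_dvd_of_pow_eq_one
  rw [← chi_T, ← MonoidHom.pow_apply, pow_orderOf_eq_one, MonoidHom.one_apply]

lemma mem_zpowers (φ : SL(2,ℤ) →* ℂˣ) : φ ∈ Subgroup.zpowers chi := by
  have hu : (φ ModularGroup.S) ^ (4:ℕ) = 1 := by rw [← map_pow, rel1, _root_.map_one]
  have hv : (φ (ModularGroup.S * ModularGroup.T)) ^ (6:ℕ) = 1 := by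
    rw [← map_pow, rel3, _root_.map_one]
  have huv : (φ ModularGroup.S) ^ (2:ℕ) = (φ (ModularGroup.S * ModularGroup.T)) ^ (3:ℕ) := by
    rw [← map_pow, ← map_pow, rel2]
  have prim4 : IsPrimitiveRoot ((zeta : ℂ) ^ (3:ℕ)) 4 := zeta_prim.pow (by norm_num) (by norm_num)
  have prim6 : IsPrimitiveRoot ((zeta : ℂ) ^ (2:ℕ)) 6 := zeta_prim.pow (by norm_num) (by norm_num)
  obtain ⟨α, hα4, hαu⟩ := prim4.eq_pow_of_pow_eq_one
    (by rw [← Units.val_pow_eq_pow_val, hu, Units.val_one] : ((φ ModularGroup.S : ℂ)) ^ 4 = 1)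
  obtain ⟨β, hβ6, hβv⟩ := prim6.eq_pow_of_pow_eq_one
    (by rw [← Units.val_pow_eq_pow_val, hv, Units.val_one] :
      ((φ (ModularGroup.S * ModularGroup.T) : ℂ)) ^ 6 = 1)
  have hUS : φ ModularGroup.S = zeta ^ (3 * α) := by
    apply Units.ext
    rw [Units.val_pow_eq_pow_val, pow_mul, hαu]
  have hUV : φ (ModularGroup.S * ModularGroup.T) = zeta ^ (2 * β) := by
    apply Units.ext
    rw [Units.val_pow_eq_pow_val, pow_mul, hβv]
  have hcompat : (6 * α) % 12 = (6 * β) % 12 := by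
    have e1 : zeta ^ (6 * α) = (φ ModularGroup.S) ^ (2:ℕ) := by
      rw [hUS, ← pow_mul]; congr 1; ring
    have e2 : zeta ^ (6 * β) = (φ (ModularGroup.S * ModularGroup.T)) ^ (3:ℕ) := by
      rw [hUV, ← pow_mul]; congr 1; ring
    have : zeta ^ (6 * α) = zeta ^ (6 * β) := by rw [e1, e2, huv]
    have := pow_eq_pow_iff_modEq.mp this
    rwa [zeta_order] at this
  have hpar : α % 2 = β % 2 := by omega
  set k : ℕ := 3 * α + 8 * β with hk
  have hSk : φ ModularGroup.S = (chi ^ k) ModularGroup.S := by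
    rw [MonoidHom.pow_apply, chi_S, hUS, ← pow_mul]
    apply pow_eq_pow_iff_modEq.mpr
    rw [zeta_order]
    show (3 * α) % 12 = (9 * k) % 12
    omega
  have hTk : φ ModularGroup.T = (chi ^ k) ModularGroup.T := by
    have hφT : φ ModularGroup.T = (φ ModularGroup.S)⁻¹ * φ (ModularGroup.S * ModularGroup.T) := by
      rw [← _root_.map_inv, ← _root_.map_mul, inv_mul_cancel_left]
    rw [hφT, MonoidHom.pow_apply, chi_T, hUS, hUV, inv_mul_eq_iff_eq_mul, ← pow_add]
    apply pow_eq_pow_iff_modEq.mpr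
    rw [zeta_order]
    show (2 * β) % 12 = (3 * α + k) % 12
    omega
  have hfin : φ = chi ^ k := by
    apply MonoidHom.eq_of_eqOn_dense closure_ST
    intro x hx
    rcases hx with rfl | hx
    · exact hSk
    · rw [Set.mem_singleton_iff] at hx; subst hx; exact hTk
  rw [Subgroup.mem_zpowers_iff]
  exact ⟨(k:ℤ), by rw [zpow_natCast, hfin]⟩

/-- The group `Hom(SL(2,ℤ), ℂˣ)` of characters of the modular group is cyclic of
order 12, generated by the character `χ` with `χ(T) = e^{2πi/12}` and
`χ(S) = e^{-2πi/4}`. -/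
theorem characters_SL2Z_cyclic_order_twelve :
    ∃ χ : SL(2,ℤ) →* ℂˣ,
      (χ ModularGroup.T : ℂ) = Complex.exp (2 * (Real.pi) * I * (1 / 12)) ∧
      (χ ModularGroup.S : ℂ) = Complex.exp (-(2 * (Real.pi) * I * (1 / 4))) ∧
      orderOf χ = 12 ∧
      ∀ φ : SL(2,ℤ) →* ℂˣ, φ ∈ Subgroup.zpowers χ := by
  exact ⟨chi, chi_T_val, chi_S_val, chi_order, mem_zpowers⟩
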